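/- For every n ≥ 2, the number of indecomposable permutations of {1,...,n} that avoid the pattern 213 equals C_n − C_{n−1}, where C_n is the n-th Catalan number. -/
import Mathlib

open Finset Equiv

noncomputable section AuxStmt3
open scoped Classical

/-- 213-avoidance, exactly as in the statement. -/
def Avoid213 {n : ℕ} (π : Equiv.Perm (Fin n)) : Prop :=
  ¬ ∃ a b c : Fin n, a < b ∧ b < c ∧ π b < π a ∧ π a < π c

def avoidSet (n : ℕ) : Finset (Equiv.Perm (Fin n)) :=
  Finset.univ.filter fun π => Avoid213 π

/-- The gluing function: positions `< m` carry `σ` on the top values,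
position `m` carries value `0`, positions `> m` carry `τ` shifted by 1. -/
def glueF (n m : ℕ) (hm : m ≤ n) (σ : Equiv.Perm (Fin m)) (τ : Equiv.Perm (Fin (n - m)))
    (i : Fin (n + 1)) : Fin (n + 1) :=
  if h : i.val < m then
    ⟨n - m + 1 + (σ ⟨i.val, h⟩).val, by have := (σ ⟨i.val, h⟩).isLt; omega⟩
  else if h2 : m < i.val then
    ⟨1 + (τ ⟨i.val - m - 1, by have := i.isLt; omega⟩).val, by
      have := (τ ⟨i.val - m - 1, by have := i.isLt; omega⟩).isLt; omega⟩
  else ⟨0, by omega⟩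

lemma glueF_val_lt {n m : ℕ} (hm : m ≤ n) (σ : Equiv.Perm (Fin m)) (τ : Equiv.Perm (Fin (n - m)))
    (j : Fin m) (i : Fin (n + 1)) (h : i.val = j.val) :
    (glueF n m hm σ τ i).val = n - m + 1 + (σ j).val := by
  have hj : i.val < m := by have := j.isLt; omega
  simp only [glueF, dif_pos hj]
  have hje : (⟨i.val, hj⟩ : Fin m) = j := Fin.ext h
  rw [hje]

lemma glueF_val_eq {n m : ℕ} (hm : m ≤ n) (σ : Equiv.Perm (Fin m)) (τ : Equiv.Perm (Fin (n - m)))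
    (i : Fin (n + 1)) (h : i.val = m) :
    (glueF n m hm σ τ i).val = 0 := by
  simp only [glueF]
  rw [dif_neg (by first | omega | (simp only [Fin.val_mk, Fin.val_zero]; omega)), dif_neg (by first | omega | (simp only [Fin.val_mk, Fin.val_zero]; omega))]

lemma glueF_val_gt {n m : ℕ} (hm : m ≤ n) (σ : Equiv.Perm (Fin m)) (τ : Equiv.Perm (Fin (n - m)))
    (j : Fin (n - m)) (i : Fin (n + 1)) (h : i.val = m + 1 + j.val) :
    (glueF n m hm σ τ i).val = 1 + (τ j).val := by
  have hj : ¬ i.val < m := by omega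
  simp only [glueF, dif_neg hj, dif_pos (show m < i.val by omega)]
  have hje : (⟨i.val - m - 1, by have := i.isLt; omega⟩ : Fin (n - m)) = j := Fin.ext (by first | omega | (simp only [Fin.val_mk, Fin.val_zero]; omega))
  rw [hje]

lemma glueF_injective (n m : ℕ) (hm : m ≤ n) (σ : Equiv.Perm (Fin m)) (τ : Equiv.Perm (Fin (n - m))) :
    Function.Injective (glueF n m hm σ τ) := by
  intro i j hij
  have hi := i.isLt
  have hj := j.isLt
  apply Fin.ext
  rcases lt_trichotomy i.val m with h1 | h1 | h1 <;>
    rcases lt_trichotomy j.val m with h2 | h2 | h2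
  · have e1 := glueF_val_lt hm σ τ ⟨i.val, h1⟩ i rfl
    have e2 := glueF_val_lt hm σ τ ⟨j.val, h2⟩ j rfl
    rw [hij] at e1
    have : σ ⟨i.val, h1⟩ = σ ⟨j.val, h2⟩ := Fin.ext (by first | omega | (simp only [Fin.val_mk, Fin.val_zero]; omega))
    have h3 := σ.injective this
    rw [Fin.mk.injEq] at h3
    exact h3
  · have e1 := glueF_val_lt hm σ τ ⟨i.val, h1⟩ i rfl
    have e2 := glueF_val_eq hm σ τ j h2
    have hb := (σ ⟨i.val, h1⟩).isLt
    rw [hij] at e1; omega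
  · have e1 := glueF_val_lt hm σ τ ⟨i.val, h1⟩ i rfl
    have e2 := glueF_val_gt hm σ τ ⟨j.val - m - 1, by omega⟩ j (by first | omega | (simp only [Fin.val_mk, Fin.val_zero]; omega))
    have hb := (τ ⟨j.val - m - 1, by omega⟩).isLt
    rw [hij] at e1; omega
  · have e1 := glueF_val_eq hm σ τ i h1
    have e2 := glueF_val_lt hm σ τ ⟨j.val, h2⟩ j rfl
    rw [hij] at e1; omega
  · omega
  · have e1 := glueF_val_eq hm σ τ i h1
    have e2 := glueF_val_gt hm σ τ ⟨j.val - m - 1, by omega⟩ j (by first | omega | (simp only [Fin.val_mk, Fin.val_zero]; omega))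
    rw [hij] at e1; omega
  · have e1 := glueF_val_gt hm σ τ ⟨i.val - m - 1, by omega⟩ i (by first | omega | (simp only [Fin.val_mk, Fin.val_zero]; omega))
    have e2 := glueF_val_lt hm σ τ ⟨j.val, h2⟩ j rfl
    have hb := (τ ⟨i.val - m - 1, by omega⟩).isLt
    rw [hij] at e1; omega
  · have e1 := glueF_val_gt hm σ τ ⟨i.val - m - 1, by omega⟩ i (by first | omega | (simp only [Fin.val_mk, Fin.val_zero]; omega))
    have e2 := glueF_val_eq hm σ τ j h2
    rw [hij] at e1; omega
  · have e1 := glueF_val_gt hm σ τ ⟨i.val - m - 1, by omega⟩ i (by first | omega | (simp only [Fin.val_mk, Fin.val_zero]; omega))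
    have e2 := glueF_val_gt hm σ τ ⟨j.val - m - 1, by omega⟩ j (by first | omega | (simp only [Fin.val_mk, Fin.val_zero]; omega))
    rw [hij] at e1
    have : τ ⟨i.val - m - 1, by omega⟩ = τ ⟨j.val - m - 1, by omega⟩ := Fin.ext (by first | omega | (simp only [Fin.val_mk, Fin.val_zero]; omega))
    have h3 := τ.injective this
    rw [Fin.mk.injEq] at h3
    omega

def glue (n m : ℕ) (hm : m ≤ n) (σ : Equiv.Perm (Fin m)) (τ : Equiv.Perm (Fin (n - m))) :
    Equiv.Perm (Fin (n + 1)) :=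
  Equiv.ofBijective _ (Finite.injective_iff_bijective.mp (glueF_injective n m hm σ τ))

lemma glue_apply (n m : ℕ) (hm : m ≤ n) (σ : Equiv.Perm (Fin m)) (τ : Equiv.Perm (Fin (n - m)))
    (i : Fin (n + 1)) : glue n m hm σ τ i = glueF n m hm σ τ i := rfl

/-- Values of glue. -/
lemma glue_val_lt {n m : ℕ} (hm : m ≤ n) (σ : Equiv.Perm (Fin m)) (τ : Equiv.Perm (Fin (n - m)))
    (j : Fin m) (i : Fin (n + 1)) (h : i.val = j.val) :
    (glue n m hm σ τ i).val = n - m + 1 + (σ j).val := glueF_val_lt hm σ τ j i h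

lemma glue_val_eq {n m : ℕ} (hm : m ≤ n) (σ : Equiv.Perm (Fin m)) (τ : Equiv.Perm (Fin (n - m)))
    (i : Fin (n + 1)) (h : i.val = m) : (glue n m hm σ τ i).val = 0 := glueF_val_eq hm σ τ i h

lemma glue_val_gt {n m : ℕ} (hm : m ≤ n) (σ : Equiv.Perm (Fin m)) (τ : Equiv.Perm (Fin (n - m)))
    (j : Fin (n - m)) (i : Fin (n + 1)) (h : i.val = m + 1 + j.val) :
    (glue n m hm σ τ i).val = 1 + (τ j).val := glueF_val_gt hm σ τ j i h

/-- glue avoids 213 iff the pieces do. -/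
lemma avoid_glue {n m : ℕ} (hm : m ≤ n) (σ : Equiv.Perm (Fin m)) (τ : Equiv.Perm (Fin (n - m)))
    (hσ : Avoid213 σ) (hτ : Avoid213 τ) : Avoid213 (glue n m hm σ τ) := by
  rintro ⟨a, b, c, hab, hbc, hba, hac⟩
  rw [Fin.lt_def] at hab hbc hba hac
  rcases lt_trichotomy a.val m with h1 | h1 | h1
  · -- a in first block; π a ≥ n-m+1, so π c > π a forces c in first block
    have ea := glue_val_lt hm σ τ ⟨a.val, h1⟩ a rfl
    have hc1 : c.val < m := by
      by_contra hc
      rcases Nat.eq_or_lt_of_le (not_lt.mp hc) with hc2 | hc2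
      · have := glue_val_eq hm σ τ c hc2.symm; omega
      · have ec := glue_val_gt hm σ τ ⟨c.val - m - 1, by have := c.isLt; omega⟩ c (by first | omega | (simp only [Fin.val_mk, Fin.val_zero]; omega))
        have := (τ ⟨c.val - m - 1, by have := c.isLt; omega⟩).isLt
        omega
    have hb1 : b.val < m := by omega
    have eb := glue_val_lt hm σ τ ⟨b.val, hb1⟩ b rfl
    have ec := glue_val_lt hm σ τ ⟨c.val, hc1⟩ c rfl
    exact hσ ⟨⟨a.val, h1⟩, ⟨b.val, hb1⟩, ⟨c.val, hc1⟩, by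
      simp only [Fin.lt_def, Fin.val_mk, Fin.val_zero]; omega, by simp only [Fin.lt_def, Fin.val_mk, Fin.val_zero]; omega,
      by simp only [Fin.lt_def, Fin.val_mk, Fin.val_zero]; omega⟩
  · have ea := glue_val_eq hm σ τ a h1
    omega
  · -- a, b, c all in last block
    have hb1 : m < b.val := by omega
    have hc1 : m < c.val := by omega
    have ea := glue_val_gt hm σ τ ⟨a.val - m - 1, by have := a.isLt; omega⟩ a (by first | omega | (simp only [Fin.val_mk, Fin.val_zero]; omega))
    have eb := glue_val_gt hm σ τ ⟨b.val - m - 1, by have := b.isLt; omega⟩ b (by first | omega | (simp only [Fin.val_mk, Fin.val_zero]; omega))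
    have ec := glue_val_gt hm σ τ ⟨c.val - m - 1, by have := c.isLt; omega⟩ c (by first | omega | (simp only [Fin.val_mk, Fin.val_zero]; omega))
    exact hτ ⟨⟨a.val - m - 1, by have := a.isLt; omega⟩,
      ⟨b.val - m - 1, by have := b.isLt; omega⟩,
      ⟨c.val - m - 1, by have := c.isLt; omega⟩,
      by simp only [Fin.lt_def, Fin.val_mk, Fin.val_zero]; omega, by simp only [Fin.lt_def, Fin.val_mk, Fin.val_zero]; omega,
      by simp only [Fin.lt_def, Fin.val_mk, Fin.val_zero]; omega⟩

lemma avoid_of_avoid_glue_left {n m : ℕ} (hm : m ≤ n) (σ : Equiv.Perm (Fin m))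
    (τ : Equiv.Perm (Fin (n - m))) (h : Avoid213 (glue n m hm σ τ)) : Avoid213 σ := by
  rintro ⟨a, b, c, hab, hbc, hba, hac⟩
  rw [Fin.lt_def] at hab hbc hba hac
  have ha := a.isLt; have hb := b.isLt; have hc := c.isLt
  refine h ⟨⟨a.val, by omega⟩, ⟨b.val, by omega⟩, ⟨c.val, by omega⟩, ?_, ?_, ?_, ?_⟩
  · simp only [Fin.lt_def, Fin.val_mk, Fin.val_zero]; omega
  · simp only [Fin.lt_def, Fin.val_mk, Fin.val_zero]; omega
  · have ea := glue_val_lt hm σ τ a ⟨a.val, by omega⟩ rfl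
    have eb := glue_val_lt hm σ τ b ⟨b.val, by omega⟩ rfl
    simp only [Fin.lt_def, Fin.val_mk, Fin.val_zero]; omega
  · have ea := glue_val_lt hm σ τ a ⟨a.val, by omega⟩ rfl
    have ec := glue_val_lt hm σ τ c ⟨c.val, by omega⟩ rfl
    simp only [Fin.lt_def, Fin.val_mk, Fin.val_zero]; omega

lemma avoid_of_avoid_glue_right {n m : ℕ} (hm : m ≤ n) (σ : Equiv.Perm (Fin m))
    (τ : Equiv.Perm (Fin (n - m))) (h : Avoid213 (glue n m hm σ τ)) : Avoid213 τ := by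
  rintro ⟨a, b, c, hab, hbc, hba, hac⟩
  rw [Fin.lt_def] at hab hbc hba hac
  have ha := a.isLt; have hb := b.isLt; have hc := c.isLt
  refine h ⟨⟨m + 1 + a.val, by omega⟩, ⟨m + 1 + b.val, by omega⟩, ⟨m + 1 + c.val, by omega⟩,
    ?_, ?_, ?_, ?_⟩
  · simp only [Fin.lt_def, Fin.val_mk, Fin.val_zero]; omega
  · simp only [Fin.lt_def, Fin.val_mk, Fin.val_zero]; omega
  · have ea := glue_val_gt hm σ τ a ⟨m + 1 + a.val, by omega⟩ rfl
    have eb := glue_val_gt hm σ τ b ⟨m + 1 + b.val, by omega⟩ rfl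
    simp only [Fin.lt_def, Fin.val_mk, Fin.val_zero]; omega
  · have ea := glue_val_gt hm σ τ a ⟨m + 1 + a.val, by omega⟩ rfl
    have ec := glue_val_gt hm σ τ c ⟨m + 1 + c.val, by omega⟩ rfl
    simp only [Fin.lt_def, Fin.val_mk, Fin.val_zero]; omega

section Split

variable {n m : ℕ} (hm : m ≤ n) (π : Equiv.Perm (Fin (n + 1)))
  (hA : Avoid213 π) (h0 : π ⟨m, by omega⟩ = 0)

include hm hA h0

/-- For an avoiding permutation with `π m = 0`: earlier values beat later values. -/
lemma key_cross (a c : Fin (n + 1)) (ha : a.val < m) (hc : m < c.val) :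
    (π c).val < (π a).val := by
  by_contra hcon
  have hne : π a ≠ π c := fun he => by
    have := π.injective he
    simp only [Fin.ext_iff, Fin.val_mk, Fin.val_zero] at this
    omega
  have h1 : (π a).val < (π c).val := by
    rcases Nat.lt_or_ge (π a).val (π c).val with h | h
    · exact h
    · exfalso; apply hne; apply Fin.ext; omega
  have h2 : (π a).val ≠ 0 := by
    intro he
    have : π a = π ⟨m, by omega⟩ := by rw [h0]; exact Fin.ext he
    have := π.injective this
    simp only [Fin.ext_iff, Fin.val_mk, Fin.val_zero] at this
    omega
  apply hA
  refine ⟨a, ⟨m, by omega⟩, c, ?_, ?_, ?_, ?_⟩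
  · simp only [Fin.lt_def, Fin.val_mk, Fin.val_zero]; omega
  · simp only [Fin.lt_def, Fin.val_mk, Fin.val_zero]; omega
  · simp only [Fin.lt_def, h0, Fin.val_mk, Fin.val_zero]; omega
  · simp only [Fin.lt_def, Fin.val_mk, Fin.val_zero]; omega

lemma val_lower (a : Fin (n + 1)) (ha : a.val < m) : n - m + 1 ≤ (π a).val := by
  classical
  have hsub : (Finset.univ.filter fun c : Fin (n + 1) => m ≤ c.val).image π ⊆
      Finset.Iio (π a) := by
    intro v hv
    simp only [Finset.mem_image, Finset.mem_filter, Finset.mem_univ, true_and] at hv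
    obtain ⟨c, hc, rfl⟩ := hv
    rw [Finset.mem_Iio, Fin.lt_def]
    rcases Nat.eq_or_lt_of_le hc with hc2 | hc2
    · have : c = ⟨m, by omega⟩ := Fin.ext (by first | omega | (simp only [Fin.val_mk, Fin.val_zero]; omega))
      rw [this, h0]
      have h2 : (π a).val ≠ 0 := by
        intro he
        have : π a = π ⟨m, by omega⟩ := by rw [h0]; exact Fin.ext he
        have := π.injective this
        apply_fun Fin.val at this
        omega
      simp only [Fin.val_zero]; omega
    · exact key_cross hm π hA h0 a c ha hc2
  have hcard := Finset.card_le_card hsub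
  rw [Finset.card_image_of_injective _ π.injective] at hcard
  rw [Fin.card_Iio] at hcard
  have : (Finset.univ.filter fun c : Fin (n + 1) => m ≤ c.val).card = n + 1 - m := by
    have : (Finset.univ.filter fun c : Fin (n + 1) => m ≤ c.val) =
        Finset.Ici (⟨m, by omega⟩ : Fin (n + 1)) := by
      ext c
      simp [Fin.le_def]
    rw [this, Fin.card_Ici]
  omega

lemma val_upper (c : Fin (n + 1)) (hc : m < c.val) : (π c).val ≤ n - m := by
  classical
  have hsub : (Finset.univ.filter fun a : Fin (n + 1) => a.val < m).image π ⊆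
      Finset.Ioi (π c) := by
    intro v hv
    simp only [Finset.mem_image, Finset.mem_filter, Finset.mem_univ, true_and] at hv
    obtain ⟨a, ha, rfl⟩ := hv
    rw [Finset.mem_Ioi, Fin.lt_def]
    exact key_cross hm π hA h0 a c ha hc
  have hcard := Finset.card_le_card hsub
  rw [Finset.card_image_of_injective _ π.injective] at hcard
  rw [Fin.card_Ioi] at hcard
  have : (Finset.univ.filter fun a : Fin (n + 1) => a.val < m).card = m := by
    have : (Finset.univ.filter fun a : Fin (n + 1) => a.val < m) =
        Finset.Iio (⟨m, by omega⟩ : Fin (n + 1)) := by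
      ext a
      simp [Fin.lt_def]
    rw [this, Fin.card_Iio]
  have := (π c).isLt
  omega

lemma val_pos (c : Fin (n + 1)) (hc : m < c.val) : 1 ≤ (π c).val := by
  by_contra h
  have : π c = π ⟨m, by omega⟩ := by rw [h0]; exact Fin.ext (by first | omega | (simp only [Fin.val_mk, Fin.val_zero]; omega))
  have := π.injective this
  simp only [Fin.ext_iff, Fin.val_mk, Fin.val_zero] at this
  omega

set_option maxHeartbeats 4000000 in
lemma exists_glue : ∃ (σ : Equiv.Perm (Fin m)) (τ : Equiv.Perm (Fin (n - m))),
    glue n m hm σ τ = π := by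
  classical
  have hlow := val_lower hm π hA h0
  have hupp := val_upper hm π hA h0
  have hpos := val_pos hm π hA h0
  obtain ⟨σ, hσ⟩ : ∃ σ : Equiv.Perm (Fin m), ∀ a : Fin m,
      (σ a).val = (π ⟨a.val, by have := a.isLt; omega⟩).val - (n - m + 1) := by
    have hbd : ∀ a : Fin m,
        (π ⟨a.val, by have := a.isLt; omega⟩).val - (n - m + 1) < m := fun a => by
      have h1 := hlow ⟨a.val, by have := a.isLt; omega⟩ (by simpa using a.isLt)
      have h2 := (π ⟨a.val, by have := a.isLt; omega⟩).isLt
      omega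
    have hinj : Function.Injective (fun a : Fin m =>
        (⟨(π ⟨a.val, by have := a.isLt; omega⟩).val - (n - m + 1), hbd a⟩ : Fin m)) := by
      intro a b hab
      have h1 := hlow ⟨a.val, by have := a.isLt; omega⟩ (by simpa using a.isLt)
      have h2 := hlow ⟨b.val, by have := b.isLt; omega⟩ (by simpa using b.isLt)
      simp only [Fin.mk.injEq, Fin.val_mk] at hab h1 h2
      have : π ⟨a.val, by have := a.isLt; omega⟩ = π ⟨b.val, by have := b.isLt; omega⟩ :=
        Fin.ext (by omega)
      have h3 := π.injective this
      simp only [Fin.mk.injEq] at h3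
      exact Fin.ext h3
    exact ⟨Equiv.ofBijective _ (Finite.injective_iff_bijective.mp hinj), fun a => rfl⟩
  obtain ⟨τ, hτ⟩ : ∃ τ : Equiv.Perm (Fin (n - m)), ∀ c : Fin (n - m),
      (τ c).val = (π ⟨m + 1 + c.val, by have := c.isLt; omega⟩).val - 1 := by
    have hbd : ∀ c : Fin (n - m),
        (π ⟨m + 1 + c.val, by have := c.isLt; omega⟩).val - 1 < n - m := fun c => by
      have h1 := hupp ⟨m + 1 + c.val, by have := c.isLt; omega⟩
        (by simp only [Fin.val_mk]; omega)
      have h2 := hpos ⟨m + 1 + c.val, by have := c.isLt; omega⟩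
        (by simp only [Fin.val_mk]; omega)
      omega
    have hinj : Function.Injective (fun c : Fin (n - m) =>
        (⟨(π ⟨m + 1 + c.val, by have := c.isLt; omega⟩).val - 1, hbd c⟩ : Fin (n - m))) := by
      intro a b hab
      have h1 := hpos ⟨m + 1 + a.val, by have := a.isLt; omega⟩
        (by simp only [Fin.val_mk]; omega)
      have h2 := hpos ⟨m + 1 + b.val, by have := b.isLt; omega⟩
        (by simp only [Fin.val_mk]; omega)
      simp only [Fin.mk.injEq, Fin.val_mk] at hab h1 h2
      have : π ⟨m + 1 + a.val, by have := a.isLt; omega⟩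
          = π ⟨m + 1 + b.val, by have := b.isLt; omega⟩ :=
        Fin.ext (by omega)
      have h3 := π.injective this
      simp only [Fin.mk.injEq] at h3
      exact Fin.ext (by omega)
    exact ⟨Equiv.ofBijective _ (Finite.injective_iff_bijective.mp hinj), fun c => rfl⟩
  refine ⟨σ, τ, ?_⟩
  apply Equiv.ext
  intro i
  apply Fin.ext
  rcases lt_trichotomy i.val m with h1 | h1 | h1
  · have e := glue_val_lt hm σ τ ⟨i.val, h1⟩ i rfl
    have hv := hσ ⟨i.val, h1⟩
    have h2 := hlow ⟨i.val, by have := i.isLt; omega⟩ (by simpa using h1)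
    have hpi : π ⟨(⟨i.val, h1⟩ : Fin m).val, by have := i.isLt; omega⟩ = π i :=
      congrArg π (Fin.ext rfl)
    have hpi2 : π ⟨i.val, by have := i.isLt; omega⟩ = π i := congrArg π (Fin.ext rfl)
    rw [hpi] at hv
    rw [hpi2] at h2
    omega
  · have e := glue_val_eq hm σ τ i h1
    have hpi : π ⟨m, by omega⟩ = π i := congrArg π (Fin.ext h1.symm)
    rw [hpi] at h0
    rw [e, h0]
    rfl
  · have e := glue_val_gt hm σ τ ⟨i.val - m - 1, by have := i.isLt; omega⟩ i
      (by simp only [Fin.val_mk]; omega)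
    have hv := hτ ⟨i.val - m - 1, by have := i.isLt; omega⟩
    have h2 := hpos ⟨m + 1 + (i.val - m - 1), by have := i.isLt; omega⟩
      (by simp only [Fin.val_mk]; omega)
    have hpi : π ⟨m + 1 + (⟨i.val - m - 1, by have := i.isLt; omega⟩ : Fin (n - m)).val,
        by have := i.isLt; simp only [Fin.val_mk]; omega⟩ = π i :=
      congrArg π (Fin.ext (by simp only [Fin.val_mk]; omega))
    have hpi2 : π ⟨m + 1 + (i.val - m - 1), by have := i.isLt; omega⟩ = π i :=
      congrArg π (Fin.ext (by simp only [Fin.val_mk]; omega))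
    rw [hpi] at hv
    rw [hpi2] at h2
    omega

end Split

set_option maxHeartbeats 1600000 in
/-- The fiber count. -/
lemma fiber_card (n m : ℕ) (hm : m ≤ n) :
    ((avoidSet (n + 1)).filter fun π => (π.symm 0).val = m).card =
      (avoidSet m).card * (avoidSet (n - m)).card := by
  classical
  rw [← Finset.card_product]
  refine (Finset.card_bij (fun p _ => glue n m hm p.1 p.2) ?_ ?_ ?_).symm
  · -- maps into
    rintro ⟨σ, τ⟩ hp
    simp only [Finset.mem_product, avoidSet, Finset.mem_filter, Finset.mem_univ, true_and] at hp
    simp only [avoidSet, Finset.mem_filter, Finset.mem_univ, true_and]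
    refine ⟨avoid_glue hm σ τ hp.1 hp.2, ?_⟩
    have : glue n m hm σ τ ⟨m, by omega⟩ = 0 := Fin.ext (glue_val_eq hm σ τ _ rfl)
    rw [← this, Equiv.symm_apply_apply]
  · -- injective
    rintro ⟨σ₁, τ₁⟩ h1 ⟨σ₂, τ₂⟩ h2 he
    have he' : glue n m hm σ₁ τ₁ = glue n m hm σ₂ τ₂ := he
    have hσ : σ₁ = σ₂ := by
      ext j
      have e1 := glue_val_lt hm σ₁ τ₁ j ⟨j.val, by have := j.isLt; omega⟩ rfl
      have e2 := glue_val_lt hm σ₂ τ₂ j ⟨j.val, by have := j.isLt; omega⟩ rfl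
      rw [he'] at e1
      omega
    have hτ : τ₁ = τ₂ := by
      ext j
      have e1 := glue_val_gt hm σ₁ τ₁ j ⟨m + 1 + j.val, by have := j.isLt; omega⟩ rfl
      have e2 := glue_val_gt hm σ₂ τ₂ j ⟨m + 1 + j.val, by have := j.isLt; omega⟩ rfl
      rw [he'] at e1
      omega
    simp [hσ, hτ]
  · -- surjective
    intro π hπ
    simp only [avoidSet, Finset.mem_filter, Finset.mem_univ, true_and] at hπ
    obtain ⟨hA, hsym⟩ := hπ
    have h0 : π ⟨m, by omega⟩ = 0 := by
      have : π.symm 0 = ⟨m, by omega⟩ := Fin.ext hsym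
      rw [← this, Equiv.apply_symm_apply]
    obtain ⟨σ, τ, hglue⟩ := exists_glue hm π hA h0
    refine ⟨⟨σ, τ⟩, ?_, hglue⟩
    simp only [Finset.mem_product, avoidSet, Finset.mem_filter, Finset.mem_univ, true_and]
    rw [← hglue] at hA
    exact ⟨avoid_of_avoid_glue_left hm σ τ hA, avoid_of_avoid_glue_right hm σ τ hA⟩

lemma avoidSet_zero_card : (avoidSet 0).card = 1 := by
  classical
  have : avoidSet 0 = Finset.univ := by
    apply Finset.filter_true_of_mem
    intro π _
    rintro ⟨a, _, _, _⟩
    exact a.elim0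
  rw [this, Finset.card_univ]
  simp [Fintype.card_equiv (Equiv.refl (Fin 0))]

lemma avoidSet_card (n : ℕ) : (avoidSet n).card = catalan n := by
  classical
  induction n using Nat.strong_induction_on with
  | _ n ih =>
    match n with
    | 0 => simpa using avoidSet_zero_card
    | (n + 1) =>
      rw [catalan_succ]
      rw [Finset.card_eq_sum_card_fiberwise
        (f := fun π : Equiv.Perm (Fin (n + 1)) => π.symm 0) (t := Finset.univ)
        (fun x _ => Finset.mem_univ _)]
      apply Finset.sum_congr rfl
      intro b _
      have hb : (b : ℕ) ≤ n := by have := b.isLt; omega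
      have hfilter : (avoidSet (n + 1)).filter (fun π => π.symm 0 = b) =
          (avoidSet (n + 1)).filter (fun π => (π.symm 0).val = b.val) := by
        apply Finset.filter_congr
        intro x _
        exact ⟨fun h => congrArg Fin.val h, fun h => Fin.ext h⟩
      rw [hfilter, fiber_card n b.val hb, ih b.val (by omega), ih (n - b.val) (by omega)]

/-- For an avoider (n ≥ 2): decomposable iff it fixes 0. -/
lemma dec_iff_fix (n : ℕ) (hn : 2 ≤ n) (π : Equiv.Perm (Fin n)) (hA : Avoid213 π) :
    (∃ i : ℕ, 0 < i ∧ i < n ∧ ∀ a : Fin n, a.val < i ↔ (π a).val < i) ↔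
      π ⟨0, by omega⟩ = ⟨0, by omega⟩ := by
  constructor
  · rintro ⟨i, hi0, hin, hiff⟩
    by_contra hne
    have h00 : (π ⟨0, by omega⟩).val ≠ 0 := fun h => hne (Fin.ext h)
    set b := π.symm ⟨0, by omega⟩ with hbdef
    have hπb : (π b).val = 0 := by rw [hbdef, Equiv.apply_symm_apply]
    have hblt : b.val < i := (hiff b).mpr (by omega)
    have hbne : b.val ≠ 0 := by
      intro h
      apply hne
      have : b = ⟨0, by omega⟩ := Fin.ext h
      rw [← this, hbdef, Equiv.apply_symm_apply]
      exact Fin.ext (by omega)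
    have hπ0 : (π ⟨0, by omega⟩).val < i := (hiff ⟨0, by omega⟩).mp (by simpa using hi0)
    set c := π.symm ⟨i, hin⟩ with hcdef
    have hπc : (π c).val = i := by rw [hcdef, Equiv.apply_symm_apply]
    have hcge : ¬ c.val < i := fun h => by have := (hiff c).mp h; omega
    apply hA
    refine ⟨⟨0, by omega⟩, b, c, ?_, ?_, ?_, ?_⟩ <;>
      simp only [Fin.lt_def, Fin.val_mk, Fin.val_zero] <;> omega
  · intro h0
    refine ⟨1, by omega, by omega, fun a => ?_⟩
    constructor
    · intro ha
      have : a = ⟨0, by omega⟩ := Fin.ext (by simp only [Fin.val_mk]; omega)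
      rw [this, h0]
      simp
    · intro ha
      have : π a = π ⟨0, by omega⟩ := by rw [h0]; exact Fin.ext (by simp only [Fin.val_mk]; omega)
      have := π.injective this
      simp only [Fin.ext_iff, Fin.val_mk] at this
      omega

lemma fixed_card (n : ℕ) (hn : 1 ≤ n) :
    ((avoidSet n).filter fun π => π ⟨0, by omega⟩ = ⟨0, by omega⟩).card = catalan (n - 1) := by
  classical
  obtain ⟨n', rfl⟩ : ∃ n', n = n' + 1 := ⟨n - 1, by omega⟩
  have hfilter : ((avoidSet (n' + 1)).filter fun π => π ⟨0, by omega⟩ = ⟨0, by omega⟩) =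
      ((avoidSet (n' + 1)).filter fun π => (π.symm 0).val = 0) := by
    apply Finset.filter_congr
    intro π _
    have h0 : (0 : Fin (n' + 1)) = ⟨0, by omega⟩ := Fin.ext (by simp)
    constructor
    · intro h
      rw [h0, ← h, Equiv.symm_apply_apply]
    · intro h
      have h1 : π.symm 0 = ⟨0, by omega⟩ := Fin.ext (by simpa using h)
      have h2 : π (π.symm 0) = 0 := Equiv.apply_symm_apply π 0
      rw [h1] at h2
      rw [h2]
      exact h0
  rw [hfilter, fiber_card n' 0 (Nat.zero_le _), avoidSet_zero_card, one_mul,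
    Nat.sub_zero, avoidSet_card]
  simp

end AuxStmt3

/-- For n ≥ 2, the number of indecomposable 213-avoiding permutations
of {1,...,n} is Cₙ - Cₙ₋₁. -/
theorem stmt3 (n : ℕ) (hn : 2 ≤ n) :
    Nat.card {π : Equiv.Perm (Fin n) //
      (¬ ∃ i : ℕ, 0 < i ∧ i < n ∧ ∀ a : Fin n, a.val < i ↔ (π a).val < i) ∧
      ¬ ∃ a b c : Fin n, a < b ∧ b < c ∧ π b < π a ∧ π a < π c} =
    catalan n - catalan (n - 1) := by
  classical
  rw [Nat.card_eq_fintype_card, Fintype.card_subtype]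
  have hset : (Finset.univ.filter fun π : Equiv.Perm (Fin n) =>
      (¬ ∃ i : ℕ, 0 < i ∧ i < n ∧ ∀ a : Fin n, a.val < i ↔ (π a).val < i) ∧
      ¬ ∃ a b c : Fin n, a < b ∧ b < c ∧ π b < π a ∧ π a < π c) =
      avoidSet n \ ((avoidSet n).filter fun π => π ⟨0, by omega⟩ = ⟨0, by omega⟩) := by
    ext π
    simp only [Finset.mem_filter, Finset.mem_univ, true_and, Finset.mem_sdiff, avoidSet]
    constructor
    · rintro ⟨hdec, hav⟩
      exact ⟨hav, fun h => hdec ((dec_iff_fix n hn π hav).mpr h.2)⟩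
    · rintro ⟨hav, hfix⟩
      exact ⟨fun h => hfix ⟨hav, (dec_iff_fix n hn π hav).mp h⟩, hav⟩
  rw [hset, Finset.card_sdiff_of_subset (Finset.filter_subset _ _), avoidSet_card,
    fixed_card n (by omega)]
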